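/- arXiv:1606.05127 — 2 statements merged into one kernel-verified Lean document; each statement's English description precedes it below -/
import Mathlib

section
/- Let κ > 0, μ > 0, γ̄ > 0, and let f be the κ-μ probability density function with mean γ̄ and shape parameters κ, μ. Then for every s ∈ ℝ and every z ≥ 0, the lower incomplete MGF is given in closed form by ∫_0^z e^{s x} f(x) dx = (μ^μ (1+κ)^μ z^μ / (Γ(μ+1) γ̄^μ e^{κμ})) · exp( (s − μ(1+κ)/γ̄) z ) · Φ₃( 1, μ+1 ; (μ(1+κ)/γ̄ − s) z , μ²κ(1+κ) z / γ̄ ). -/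
open MeasureTheory Real

/-- Pochhammer symbol `(a)ₙ = a (a+1) ⋯ (a+n-1)`. -/
noncomputable def poch (a : ℝ) (n : ℕ) : ℝ := ∏ j ∈ Finset.range n, (a + j)

/-- Humbert bivariate confluent hypergeometric function `Φ₃(b;c;x,y)`. -/
noncomputable def Phi3 (b c x y : ℝ) : ℝ :=
  ∑' m : ℕ, ∑' n : ℕ,
    poch b m / poch c (m + n) * x ^ m * y ^ n
      / ((Nat.factorial m : ℝ) * (Nat.factorial n : ℝ))

/-- Modified Bessel function of the first kind of (real) order `ν`:
`I_ν(y) = Σ_{k} (y/2)^{ν+2k} / (k! Γ(ν+k+1))`. -/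
noncomputable def besselI (ν y : ℝ) : ℝ :=
  ∑' k : ℕ, (y / 2) ^ (ν + 2 * (k : ℝ)) / ((Nat.factorial k : ℝ) * Real.Gamma (ν + k + 1))

/-- The κ-μ probability density function with mean `γ̄` and shape parameters
`κ > 0`, `μ > 0`. -/
noncomputable def kappaMuPDF (κ μ γbar : ℝ) (x : ℝ) : ℝ :=
  if x < 0 then 0 else
    μ * (1 + κ) ^ ((μ + 1) / 2) / (κ ^ ((μ - 1) / 2) * Real.exp (μ * κ) * γbar)
      * (x / γbar) ^ ((μ - 1) / 2) * Real.exp (-(μ * (1 + κ) * x) / γbar)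
      * besselI (μ - 1) (2 * μ * Real.sqrt (κ * (1 + κ) * x / γbar))

lemma poch_pos {a : ℝ} (ha : 0 < a) (n : ℕ) : 0 < poch a n :=
  Finset.prod_pos fun j _ => by positivity

lemma poch_succ (a : ℝ) (n : ℕ) : poch a (n+1) = poch a n * (a + n) :=
  Finset.prod_range_succ _ _

lemma poch_succ' (a : ℝ) (n : ℕ) : poch a (n+1) = a * poch (a+1) n := by
  unfold poch
  rw [Finset.prod_range_succ', mul_comm]
  simp only [Nat.cast_zero, add_zero]
  congr 1
  exact Finset.prod_congr rfl fun j _ => by push_cast; ring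


lemma Gamma_poch {a : ℝ} (ha : 0 < a) (n : ℕ) :
    Real.Gamma (a + n) = Real.Gamma a * poch a n := by
  induction n with
  | zero => simp [poch]
  | succ n ih =>
      have h1 : a + ((n : ℝ) + 1) = (a + n) + 1 := by ring
      push_cast
      rw [h1, Real.Gamma_add_one (by positivity), ih, poch_succ]
      ring

lemma poch_one_eq_factorial (n : ℕ) : poch 1 n = n.factorial := by
  unfold poch
  rw [← Finset.prod_range_add_one_eq_factorial n]
  push_cast
  exact Finset.prod_congr rfl fun j _ => by ring

lemma factorial_le_poch {a : ℝ} (ha : 1 ≤ a) (n : ℕ) : (n.factorial : ℝ) ≤ poch a n := by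
  rw [← poch_one_eq_factorial]
  unfold poch
  apply Finset.prod_le_prod (fun j _ => by positivity) (fun j _ => by gcongr)

lemma beta01 {a b : ℝ} (ha : 0 < a) (hb : 0 < b) :
    ∫ x in (0:ℝ)..1, x ^ (a-1) * (1-x) ^ (b-1)
      = Real.Gamma a * Real.Gamma b / Real.Gamma (a+b) := by
  have key : ((∫ x in (0:ℝ)..1, x ^ (a-1) * (1-x) ^ (b-1) : ℝ) : ℂ)
      = Complex.betaIntegral a b := by
    rw [Complex.betaIntegral, ← intervalIntegral.integral_ofReal]
    apply intervalIntegral.integral_congr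
    intro x hx
    rw [Set.uIcc_of_le (by norm_num : (0:ℝ) ≤ 1)] at hx
    obtain ⟨h0, h1⟩ := hx
    push_cast
    rw [Complex.ofReal_cpow h0, Complex.ofReal_cpow (by linarith : (0:ℝ) ≤ 1 - x)]
    push_cast
    ring
  have hG : Real.Gamma (a+b) ≠ 0 := (Real.Gamma_pos_of_pos (by linarith)).ne'
  have h2 := Complex.Gamma_mul_Gamma_eq_betaIntegral (s := (a:ℂ)) (t := (b:ℂ))
    (by simpa using ha) (by simpa using hb)
  rw [← key] at h2
  have h3 : ((a:ℂ) + (b:ℂ)) = ((a+b : ℝ) : ℂ) := by push_cast; ring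
  rw [h3, Complex.Gamma_ofReal, Complex.Gamma_ofReal, Complex.Gamma_ofReal] at h2
  have h4 : Real.Gamma a * Real.Gamma b
      = Real.Gamma (a+b) * ∫ x in (0:ℝ)..1, x ^ (a-1) * (1-x) ^ (b-1) := by
    exact_mod_cast h2
  field_simp
  linarith [h4]

lemma beta_scaled {a : ℝ} (ha : 0 < a) {z : ℝ} (hz : 0 < z) (n : ℕ) :
    ∫ x in (0:ℝ)..z, x ^ (a-1) * (z - x) ^ n
      = z ^ (a + n) * (Real.Gamma a * n.factorial / Real.Gamma (a + n + 1)) := by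
  have hsub := intervalIntegral.integral_comp_mul_left
    (a := (0:ℝ)) (b := 1) (fun x => x ^ (a-1) * (z - x) ^ n) hz.ne'
  simp only [mul_zero, mul_one, smul_eq_mul] at hsub
  have h1 : ∫ x in (0:ℝ)..z, x ^ (a-1) * (z - x) ^ n
      = z * ∫ u in (0:ℝ)..1, (z*u) ^ (a-1) * (z - z*u) ^ n := by
    rw [hsub]
    field_simp
  rw [h1]
  have h2 : ∫ u in (0:ℝ)..1, (z*u) ^ (a-1) * (z - z*u) ^ n
      = (z ^ (a-1) * z ^ n) * ∫ u in (0:ℝ)..1, u ^ (a-1) * (1-u) ^ n := by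
    rw [← intervalIntegral.integral_const_mul]
    apply intervalIntegral.integral_congr
    intro u hu
    rw [Set.uIcc_of_le (by norm_num : (0:ℝ) ≤ 1)] at hu
    obtain ⟨h0, hle⟩ := hu
    have hzz : z - z*u = z * (1-u) := by ring
    simp only [hzz, Real.mul_rpow hz.le h0, mul_pow]
    ring
  rw [h2]
  have h3 : ∫ u in (0:ℝ)..1, u ^ (a-1) * (1-u) ^ n
      = Real.Gamma a * n.factorial / Real.Gamma (a + n + 1) := by
    have := beta01 ha (b := (n:ℝ)+1) (by positivity)
    have e1 : ((n:ℝ) + 1) - 1 = (n:ℝ) := by ring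
    rw [e1] at this
    simp only [Real.rpow_natCast] at this
    rw [this, Real.Gamma_nat_eq_factorial]
    · congr 2
      ring
  rw [h3]
  have h4 : z * (z ^ (a-1) * z ^ n) = z ^ (a + n) := by
    rw [← Real.rpow_natCast z n, show a + (n:ℝ) = (a-1) + ((n:ℝ) + 1) by ring,
        Real.rpow_add hz, Real.rpow_add hz, Real.rpow_one]
    ring
  rw [← h4]
  ring

lemma Gamma_ratio_le {a : ℝ} (ha : 0 < a) (m : ℕ) :
    Real.Gamma a / Real.Gamma (a + m + 1) ≤ 1 / (a * m.factorial) := by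
  have h0 : a + (m:ℝ) + 1 = a + ((m+1 : ℕ) : ℝ) := by push_cast; ring
  have h1 : Real.Gamma (a + m + 1) = Real.Gamma a * (a * poch (a+1) m) := by
    rw [h0, Gamma_poch ha, poch_succ']
  have hGa := Real.Gamma_pos_of_pos ha
  have hpoch := factorial_le_poch (by linarith : (1:ℝ) ≤ a+1) m
  have hpp := poch_pos (by linarith : (0:ℝ) < a+1) m
  have hfac : (0:ℝ) < m.factorial := by positivity
  rw [h1]
  rw [div_le_div_iff₀ (by positivity) (by positivity), one_mul]
  gcongr

lemma gamma_pos_add {a : ℝ} (ha : 0 < a) (m : ℕ) : 0 < Real.Gamma (a + m + 1) := by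
  have : a + (m:ℝ) + 1 = a + ((m+1 : ℕ) : ℝ) := by push_cast; ring
  rw [this, Gamma_poch ha]
  exact mul_pos (Real.Gamma_pos_of_pos ha) (poch_pos ha _)

lemma exp_series (y : ℝ) : Real.exp y = ∑' n : ℕ, y ^ n / n.factorial := by
  rw [Real.exp_eq_exp_ℝ, NormedSpace.exp_eq_tsum_div]

lemma integral_exp_rpow_series {a : ℝ} (ha : 0 < a) {z : ℝ} (hz : 0 < z) (c : ℝ) :
    ∫ x in (0:ℝ)..z, Real.exp (c*x) * x ^ (a-1)
      = Real.exp (c*z) * z ^ a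
        * ∑' m : ℕ, (-(c*z)) ^ m * (Real.Gamma a / Real.Gamma (a+m+1)) := by
  set G : ℕ → ℝ → ℝ := fun m x =>
    (Real.exp (c*z) * ((-c) ^ m / m.factorial)) * ((z - x) ^ m * x ^ (a-1)) with hG
  have hpt : ∀ x : ℝ, Real.exp (c*x) * x ^ (a-1) = ∑' m, G m x := by
    intro x
    have h1 : Real.exp (c*x) = Real.exp (c*z) * Real.exp (-c*(z-x)) := by
      rw [← Real.exp_add]; ring_nf
    rw [h1, exp_series (-c*(z-x)), ← tsum_mul_left, ← tsum_mul_right]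
    apply tsum_congr; intro m
    rw [hG, mul_pow]
    ring
  -- integrability of each G m
  have hII : ∀ m : ℕ, IntervalIntegrable (G m) volume 0 z := by
    intro m
    apply IntervalIntegrable.const_mul
    exact (intervalIntegral.intervalIntegrable_rpow' (by linarith)).continuousOn_mul
      (Continuous.continuousOn (by continuity))
  have hInt : ∀ m : ℕ, IntegrableOn (G m) (Set.Ioc 0 z) volume := fun m =>
    (intervalIntegrable_iff_integrableOn_Ioc_of_le hz.le).mp (hII m)
  -- value of each integral
  have hval : ∀ m : ℕ, ∫ x in Set.Ioc 0 z, G m x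
      = (Real.exp (c*z) * ((-c) ^ m / m.factorial))
        * (z ^ (a + m) * (Real.Gamma a * m.factorial / Real.Gamma (a + m + 1))) := by
    intro m
    rw [hG]
    simp only []
    rw [MeasureTheory.integral_const_mul]
    congr 1
    rw [← intervalIntegral.integral_of_le hz.le, ← beta_scaled ha hz m]
    apply intervalIntegral.integral_congr
    intro x _
    ring
  -- norm integrals
  have hnormval : ∀ m : ℕ, ∫ x in Set.Ioc 0 z, ‖G m x‖
      = (Real.exp (c*z) * (|c| ^ m / m.factorial))
        * (z ^ (a + m) * (Real.Gamma a * m.factorial / Real.Gamma (a + m + 1))) := by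
    intro m
    have heq : Set.EqOn (fun x => ‖G m x‖)
        (fun x => (Real.exp (c*z) * (|c| ^ m / m.factorial)) * ((z - x) ^ m * x ^ (a-1)))
        (Set.Ioc 0 z) := by
      intro x hx
      obtain ⟨hx0, hxz⟩ := hx
      simp only [hG, norm_mul, Real.norm_eq_abs]
      rw [abs_of_nonneg (by positivity : (0:ℝ) ≤ Real.exp (c*z) ), abs_div, abs_pow, abs_neg,
        abs_of_nonneg (by positivity : (0:ℝ) ≤ (m.factorial : ℝ)),
        abs_of_nonneg (pow_nonneg (by linarith : (0:ℝ) ≤ z - x) m),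
        abs_of_nonneg (Real.rpow_nonneg hx0.le _)]
      try ring
    rw [MeasureTheory.setIntegral_congr_fun measurableSet_Ioc heq]
    rw [MeasureTheory.integral_const_mul]
    congr 1
    rw [← intervalIntegral.integral_of_le hz.le, ← beta_scaled ha hz m]
    apply intervalIntegral.integral_congr
    intro x _
    ring
  -- summability of norm integrals
  have hsum : Summable (fun m : ℕ => ∫ x in Set.Ioc 0 z, ‖G m x‖) := by
    apply Summable.of_norm_bounded
      (g := fun m => (Real.exp (c*z) * z ^ a / a) * ((|c| * z) ^ m / m.factorial))
    · exact ((Real.summable_pow_div_factorial (|c| * z)).mul_left _)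
    · intro m
      rw [Real.norm_eq_abs, hnormval m]
      have hGr := Gamma_ratio_le ha m
      have hGpos := gamma_pos_add ha m
      have hGa := Real.Gamma_pos_of_pos ha
      have hfac : (0:ℝ) < m.factorial := by positivity
      have hza : (0:ℝ) < z ^ a := Real.rpow_pos_of_pos hz a
      have e1 : z ^ (a + (m:ℝ)) = z ^ a * z ^ m := by
        rw [Real.rpow_add hz, Real.rpow_natCast]
      have habs : |(Real.exp (c*z) * (|c| ^ m / m.factorial))
          * (z ^ (a + m) * (Real.Gamma a * m.factorial / Real.Gamma (a + m + 1)))|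
          = (Real.exp (c*z) * (|c| ^ m / m.factorial))
          * (z ^ (a + m) * (Real.Gamma a * m.factorial / Real.Gamma (a + m + 1))) := by
        apply abs_of_nonneg
        have : (0:ℝ) < z ^ (a + (m:ℝ)) := Real.rpow_pos_of_pos hz _
        positivity
      rw [habs, e1]
      calc Real.exp (c*z) * (|c| ^ m / m.factorial)
            * (z ^ a * z ^ m * (Real.Gamma a * m.factorial / Real.Gamma (a + m + 1)))
          = (Real.exp (c*z) * z ^ a * (|c| * z) ^ m)
            * (Real.Gamma a / Real.Gamma (a + m + 1)) := by
            rw [mul_pow]; field_simp; try ring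
        _ ≤ (Real.exp (c*z) * z ^ a * (|c| * z) ^ m) * (1 / (a * m.factorial)) := by
            gcongr <;> positivity
        _ = Real.exp (c*z) * z ^ a / a * ((|c| * z) ^ m / m.factorial) := by
            field_simp; try ring
  -- put it together
  rw [intervalIntegral.integral_of_le hz.le]
  rw [MeasureTheory.setIntegral_congr_fun measurableSet_Ioc (fun x _ => hpt x)]
  rw [← MeasureTheory.integral_tsum_of_summable_integral_norm hInt hsum]
  rw [← tsum_mul_left]
  apply tsum_congr; intro m
  rw [hval m]
  have e1 : z ^ (a + (m:ℝ)) = z ^ a * z ^ m := by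
    rw [Real.rpow_add hz, Real.rpow_natCast]
  have hfac : (m.factorial : ℝ) ≠ 0 := by positivity
  rw [e1, show -(c*z) = (-c)*z by ring, mul_pow]
  field_simp

lemma term_id (κ μ γ s x : ℝ) (hκ : 0 < κ) (hμ : 0 < μ) (hγ : 0 < γ) (hx : 0 < x) (k : ℕ) :
    (Real.exp (s*x) * (μ * (1+κ)^((μ+1)/2) / (κ^((μ-1)/2) * Real.exp (μ*κ) * γ)
      * (x/γ)^((μ-1)/2) * Real.exp (-(μ*(1+κ)*x)/γ)))
    * ((2*μ*Real.sqrt (κ*(1+κ)*x/γ) / 2) ^ ((μ-1) + 2*(k:ℝ))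
        / (k.factorial * Real.Gamma ((μ-1)+k+1)))
    = ((μ^μ*(1+κ)^μ/(γ^μ * Real.exp (κ*μ)))
        * ((μ^2*(κ*(1+κ)/γ))^k / (k.factorial * Real.Gamma (μ+k))))
      * (Real.exp ((s - μ*(1+κ)/γ)*x) * x^((μ+(k:ℝ))-1)) := by
  have h1k : (0:ℝ) < 1 + κ := by linarith
  have hq : 0 < κ*(1+κ)*x/γ := by positivity
  have hsq : 0 < Real.sqrt (κ*(1+κ)*x/γ) := Real.sqrt_pos.mpr hq
  have hμs : 0 < μ * Real.sqrt (κ*(1+κ)*x/γ) := by positivity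
  have hxg : 0 < x/γ := by positivity
  have hY : (0:ℝ) < μ^2*(κ*(1+κ)/γ) := by positivity
  have hΓpos : 0 < Real.Gamma (μ+k) := Real.Gamma_pos_of_pos (by positivity)
  have hfac : (0:ℝ) < (k.factorial : ℝ) := by positivity
  have e0 : 2*μ*Real.sqrt (κ*(1+κ)*x/γ)/2 = μ * Real.sqrt (κ*(1+κ)*x/γ) := by ring
  have eΓ : (μ-1)+(k:ℝ)+1 = μ+k := by ring
  have hblock : μ * (1+κ)^((μ+1)/2) / (κ^((μ-1)/2) * Real.exp (μ*κ) * γ)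
      = Real.exp (Real.log μ + Real.log (1+κ) * ((μ+1)/2) - Real.log κ * ((μ-1)/2)
          - μ*κ - Real.log γ) := by
    rw [Real.exp_sub, Real.exp_sub, Real.exp_sub, Real.exp_add, Real.exp_log hμ,
      Real.exp_log hγ, ← Real.rpow_def_of_pos h1k, ← Real.rpow_def_of_pos hκ]
    field_simp
  rw [e0, eΓ, hblock]
  rw [← Real.rpow_natCast (μ^2*(κ*(1+κ)/γ)) k]
  simp only [Real.rpow_def_of_pos hμs, Real.rpow_def_of_pos h1k, Real.rpow_def_of_pos hxg,
    Real.rpow_def_of_pos hμ, Real.rpow_def_of_pos hγ, Real.rpow_def_of_pos hx,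
    Real.rpow_def_of_pos hY]
  rw [Real.log_mul hμ.ne' hsq.ne', Real.log_sqrt hq.le,
    Real.log_div (mul_ne_zero (mul_ne_zero hκ.ne' h1k.ne') hx.ne') hγ.ne',
    Real.log_mul (mul_ne_zero hκ.ne' h1k.ne') hx.ne', Real.log_mul hκ.ne' h1k.ne',
    Real.log_mul (pow_ne_zero 2 hμ.ne') (div_ne_zero (mul_ne_zero hκ.ne' h1k.ne') hγ.ne'),
    Real.log_div (mul_ne_zero hκ.ne' h1k.ne') hγ.ne', Real.log_pow,
    Real.log_div hx.ne' hγ.ne', Real.log_mul hκ.ne' h1k.ne']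
  simp only [div_eq_mul_inv, mul_inv, ← Real.exp_neg]
  rw [show ((k.factorial:ℝ))⁻¹ = Real.exp (Real.log ((k.factorial:ℝ))⁻¹) from
      (Real.exp_log (by positivity)).symm,
    show (Real.Gamma (μ+k))⁻¹ = Real.exp (Real.log (Real.Gamma (μ+k))⁻¹) from
      (Real.exp_log (by positivity)).symm]
  simp only [← Real.exp_add]
  rw [Real.exp_eq_exp]
  push_cast
  ring

lemma inv_Gamma_bound {μ : ℝ} (hμ : 0 < μ) (k : ℕ) :
    (Real.Gamma (μ + k))⁻¹ ≤ max (Real.Gamma μ)⁻¹ (Real.Gamma (μ+1))⁻¹ := by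
  cases k with
  | zero => simp only [Nat.cast_zero, add_zero]; exact le_max_left _ _
  | succ j =>
      refine le_trans ?_ (le_max_right _ _)
      have hΓ1 : 0 < Real.Gamma (μ+1) := Real.Gamma_pos_of_pos (by linarith)
      have h1 : Real.Gamma (μ+1) ≤ Real.Gamma (μ + ((j:ℕ)+1 : ℕ)) := by
        have e : μ + (((j:ℕ)+1 : ℕ) : ℝ) = (μ+1) + (j : ℕ) := by push_cast; ring
        rw [e, Gamma_poch (by linarith)]
        nth_rewrite 1 [← mul_one (Real.Gamma (μ+1))]
        apply mul_le_mul_of_nonneg_left _ hΓ1.le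
        calc (1:ℝ) ≤ (j.factorial : ℝ) := by exact_mod_cast j.factorial_pos
          _ ≤ poch (μ+1) j := factorial_le_poch (by linarith) j
      exact inv_anti₀ hΓ1 h1

set_option maxHeartbeats 1000000 in
/-- closed form of the lower incomplete MGF of the κ-μ
distribution. -/
theorem lower_IMGF_kappaMu (κ μ γbar : ℝ)
    (hκ : 0 < κ) (hμ : 0 < μ) (hγ : 0 < γbar)
    (s z : ℝ) (hz : 0 ≤ z) :
    ∫ x in (0:ℝ)..z, Real.exp (s * x) * kappaMuPDF κ μ γbar x
      = μ ^ μ * (1 + κ) ^ μ * z ^ μ / (Real.Gamma (μ + 1) * γbar ^ μ * Real.exp (κ * μ))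
          * Real.exp ((s - μ * (1 + κ) / γbar) * z)
          * Phi3 1 (μ + 1)
              ((μ * (1 + κ) / γbar - s) * z)
              (μ ^ 2 * κ * (1 + κ) * z / γbar) := by
  rcases hz.lt_or_eq with hz0 | hz0
  swap
  · rw [← hz0]
    simp [Real.zero_rpow hμ.ne']
  -- notation
  set X : ℝ := (μ * (1 + κ) / γbar - s) * z with hX
  set Y : ℝ := μ ^ 2 * κ * (1 + κ) * z / γbar with hY
  have h1k : (0:ℝ) < 1 + κ := by linarith
  have hΓμ1 : 0 < Real.Gamma (μ+1) := Real.Gamma_pos_of_pos (by linarith)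
  set A : ℝ := μ^μ*(1+κ)^μ/(γbar^μ * Real.exp (κ*μ)) with hA
  set Y2 : ℝ := μ^2*(κ*(1+κ)/γbar) with hY2
  have hY2pos : 0 < Y2 := by rw [hY2]; positivity
  have hApos : 0 < A := by
    rw [hA]
    have := Real.rpow_pos_of_pos hμ μ
    have := Real.rpow_pos_of_pos h1k μ
    have := Real.rpow_pos_of_pos hγ μ
    positivity
  clear_value X Y A Y2
  set H : ℕ → ℝ → ℝ := fun k x =>
    (A * (Y2^k / (k.factorial * Real.Gamma (μ+k))))
      * (Real.exp ((s - μ*(1+κ)/γbar)*x) * x^((μ+(k:ℝ))-1)) with hH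
  set F : ℕ → ℕ → ℝ := fun m k =>
    X^m * Y^k / (k.factorial * Real.Gamma (μ+↑m+↑k+1)) with hF
  clear_value H F
  have hYY : Y = Y2 * z := by rw [hY, hY2]; ring
  have hΓadd : ∀ m k : ℕ, 0 < Real.Gamma (μ+(m:ℝ)+(k:ℝ)+1) := by
    intro m k
    have e : μ+(m:ℝ)+(k:ℝ)+1 = μ + ((m+k : ℕ) : ℝ) + 1 := by push_cast; ring
    rw [e]; exact gamma_pos_add hμ (m+k)
  have hΓk : ∀ k : ℕ, 0 < Real.Gamma (μ+(k:ℝ)) := by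
    intro k
    rw [Gamma_poch hμ]
    exact mul_pos (Real.Gamma_pos_of_pos hμ) (poch_pos hμ k)
  -- pointwise series expansion on Ioc
  have hpdf : ∀ x ∈ Set.Ioc (0:ℝ) z,
      Real.exp (s * x) * kappaMuPDF κ μ γbar x = ∑' k, H k x := by
    intro x hx
    obtain ⟨hx0, _⟩ := hx
    simp only [kappaMuPDF, if_neg (not_lt.mpr hx0.le), besselI]
    rw [← mul_assoc, ← tsum_mul_left]
    apply tsum_congr
    intro k
    simp only [hH]
    rw [hA, hY2]
    exact term_id κ μ γbar s x hκ hμ hγ hx0 k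
  -- integrability
  have hII : ∀ k : ℕ, IntervalIntegrable
      (fun x => Real.exp ((s - μ*(1+κ)/γbar)*x) * x^((μ+(k:ℝ))-1)) volume 0 z := by
    intro k
    have hk1 : (-1:ℝ) < (μ+(k:ℝ))-1 := by
      have : (0:ℝ) ≤ k := Nat.cast_nonneg k
      linarith
    exact (intervalIntegral.intervalIntegrable_rpow' hk1).continuousOn_mul
      (Continuous.continuousOn (by continuity))
  have hInt : ∀ k : ℕ, IntegrableOn (H k) (Set.Ioc 0 z) volume := by
    intro k
    simp only [hH]
    exact (intervalIntegrable_iff_integrableOn_Ioc_of_le hz0.le).mp ((hII k).const_mul _)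
  -- summability of norm integrals
  have hsum : Summable (fun k : ℕ => ∫ x in Set.Ioc 0 z, ‖H k x‖) := by
    set E : ℝ := Real.exp (|s - μ*(1+κ)/γbar| * z) with hE
    set CΓ : ℝ := max (Real.Gamma μ)⁻¹ (Real.Gamma (μ+1))⁻¹ with hCΓ
    have hCΓ0 : 0 < CΓ := lt_max_of_lt_left (by positivity)
    have hEpos : 0 < E := Real.exp_pos _
    clear_value E CΓ
    have hzμ : 0 < z^μ := Real.rpow_pos_of_pos hz0 μ
    apply Summable.of_norm_bounded
      (g := fun k => (A * E * z^μ / μ * CΓ) * ((Y2*z)^k / k.factorial))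
    · exact (Real.summable_pow_div_factorial (Y2*z)).mul_left _
    intro k
    have hΓkpos := hΓk k
    have hfac : (0:ℝ) < k.factorial := by positivity
    have hck : 0 < A * (Y2^k / (k.factorial * Real.Gamma (μ+k))) := by positivity
    have hnonneg : 0 ≤ ∫ x in Set.Ioc 0 z, ‖H k x‖ :=
      integral_nonneg fun x => norm_nonneg _
    rw [Real.norm_eq_abs, abs_of_nonneg hnonneg]
    -- bound the integral
    have hb1 : ∀ x ∈ Set.Ioc (0:ℝ) z, ‖H k x‖
        ≤ (A * (Y2^k / (k.factorial * Real.Gamma (μ+k)))) * (E * x^((μ+(k:ℝ))-1)) := by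
      intro x hx
      obtain ⟨hx0, hxz⟩ := hx
      simp only [hH]
      rw [norm_mul, Real.norm_eq_abs, Real.norm_eq_abs, abs_of_pos hck, abs_mul,
        abs_of_pos (Real.exp_pos _), abs_of_nonneg (Real.rpow_nonneg hx0.le _)]
      have hexp : Real.exp ((s - μ*(1+κ)/γbar)*x) ≤ E := by
        rw [hE]
        apply Real.exp_le_exp.mpr
        calc (s - μ*(1+κ)/γbar)*x ≤ |s - μ*(1+κ)/γbar| * x :=
              mul_le_mul_of_nonneg_right (le_abs_self _) hx0.le
          _ ≤ |s - μ*(1+κ)/γbar| * z := mul_le_mul_of_nonneg_left hxz (abs_nonneg _)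
      have hw : (0:ℝ) ≤ x^((μ+(k:ℝ))-1) := Real.rpow_nonneg hx0.le _
      gcongr
    have hIb : IntegrableOn (fun x =>
        (A * (Y2^k / (k.factorial * Real.Gamma (μ+k)))) * (E * x^((μ+(k:ℝ))-1)))
        (Set.Ioc 0 z) volume := by
      have hk1 : (-1:ℝ) < (μ+(k:ℝ))-1 := by
        have : (0:ℝ) ≤ k := Nat.cast_nonneg k
        linarith
      exact (intervalIntegrable_iff_integrableOn_Ioc_of_le hz0.le).mp
        (((intervalIntegral.intervalIntegrable_rpow' hk1).const_mul E).const_mul _)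
    have hmono := MeasureTheory.setIntegral_mono_on
      ((hInt k).norm) hIb measurableSet_Ioc hb1
    refine le_trans hmono ?_
    rw [MeasureTheory.integral_const_mul, MeasureTheory.integral_const_mul]
    have hrint : ∫ x in Set.Ioc 0 z, x^((μ+(k:ℝ))-1)
        = z^(μ+(k:ℝ)) / (μ+(k:ℝ)) := by
      rw [← intervalIntegral.integral_of_le hz0.le]
      rw [integral_rpow (Or.inl (by
        have : (0:ℝ) ≤ k := Nat.cast_nonneg k
        linarith))]
      have e1 : (μ+(k:ℝ))-1+1 = μ+(k:ℝ) := by ring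
      have hμk : (0:ℝ) < μ + k := by
        have : (0:ℝ) ≤ k := Nat.cast_nonneg k
        linarith
      rw [e1, Real.zero_rpow hμk.ne']
      ring
    rw [hrint]
    have hzk : z^(μ+(k:ℝ)) = z^μ * z^k := by
      rw [Real.rpow_add hz0, Real.rpow_natCast]
    have hμk : (0:ℝ) < μ + (k:ℝ) := by
      have : (0:ℝ) ≤ k := Nat.cast_nonneg k
      linarith
    have hkey : (Real.Gamma (μ+(k:ℝ)))⁻¹ * (μ+(k:ℝ))⁻¹ ≤ CΓ * μ⁻¹ := by
      have h2 : (μ+(k:ℝ))⁻¹ ≤ μ⁻¹ := by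
        apply inv_anti₀ hμ
        have : (0:ℝ) ≤ k := Nat.cast_nonneg k
        linarith
      exact mul_le_mul (hCΓ ▸ inv_Gamma_bound hμ k) h2 (by positivity) hCΓ0.le
    calc A * (Y2^k / ((k.factorial : ℝ) * Real.Gamma (μ+(k:ℝ)))) * (E * (z^(μ+(k:ℝ)) / (μ+(k:ℝ))))
        = (A * E * z^μ * (Y2^k * z^k) / (k.factorial : ℝ))
            * ((Real.Gamma (μ+(k:ℝ)))⁻¹ * (μ+(k:ℝ))⁻¹) := by
          rw [hzk]; field_simp
      _ ≤ (A * E * z^μ * (Y2^k * z^k) / (k.factorial : ℝ)) * (CΓ * μ⁻¹) :=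
          mul_le_mul_of_nonneg_left hkey (by positivity)
      _ = (A * E * z^μ / μ * CΓ) * ((Y2*z)^k / (k.factorial : ℝ)) := by
          rw [mul_pow]; field_simp
  -- swap integral and sum
  rw [intervalIntegral.integral_of_le hz0.le,
    MeasureTheory.setIntegral_congr_fun measurableSet_Ioc hpdf,
    ← MeasureTheory.integral_tsum_of_summable_integral_norm hInt hsum]
  -- evaluate each integral and reorganize
  have hstep1 : ∑' k, ∫ x in Set.Ioc 0 z, H k x
      = (A * Real.exp ((s - μ*(1+κ)/γbar)*z) * z^μ) * ∑' k, ∑' m, F m k := by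
    rw [← tsum_mul_left]
    apply tsum_congr
    intro k
    simp only [hH]
    rw [MeasureTheory.integral_const_mul, ← intervalIntegral.integral_of_le hz0.le]
    have hμk : (0:ℝ) < μ + (k:ℝ) := by
      have : (0:ℝ) ≤ k := Nat.cast_nonneg k
      linarith
    rw [integral_exp_rpow_series hμk hz0 (s - μ*(1+κ)/γbar)]
    rw [← tsum_mul_left, ← tsum_mul_left, ← tsum_mul_left]
    apply tsum_congr
    intro m
    simp only [hF]
    have hzk : z^(μ+(k:ℝ)) = z^μ * z^k := by
      rw [Real.rpow_add hz0, Real.rpow_natCast]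
    have e2 : μ+(k:ℝ)+(m:ℝ)+1 = μ+(m:ℝ)+(k:ℝ)+1 := by ring
    have hXe : X ^ m = (-((s - μ*(1+κ)/γbar) * z)) ^ m := by
      rw [hX]; congr 1; ring
    have h1 := hΓadd m k
    have h2 := hΓk k
    have hfac : (0:ℝ) < (k.factorial : ℝ) := by positivity
    rw [hzk, e2, hXe, hYY, mul_pow]
    field_simp
  rw [hstep1]
  -- summability of the double series
  have hFsum : Summable (Function.uncurry F) := by
    apply Summable.of_norm_bounded
      (g := fun p : ℕ × ℕ => (Real.Gamma (μ+1))⁻¹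
        * ((|X|^p.1 / p.1.factorial) * (|Y|^p.2 / p.2.factorial)))
    · apply Summable.mul_left
      apply Summable.mul_of_nonneg (Real.summable_pow_div_factorial |X|)
        (Real.summable_pow_div_factorial |Y|)
      · intro i; positivity
      · intro i; positivity
    rintro ⟨m, k⟩
    simp only [Function.uncurry, hF]
    have h1 := hΓadd m k
    have hfacm : (0:ℝ) < (m.factorial : ℝ) := by positivity
    have hfack : (0:ℝ) < (k.factorial : ℝ) := by positivity
    rw [norm_div, norm_mul, norm_mul, Real.norm_eq_abs, Real.norm_eq_abs, Real.norm_eq_abs,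
      Real.norm_eq_abs, abs_pow, abs_pow, abs_of_pos hfack, abs_of_pos h1]
    have hge : Real.Gamma (μ+1) * ((m.factorial : ℝ) * (k.factorial : ℝ))
        ≤ (k.factorial : ℝ) * Real.Gamma (μ+(m:ℝ)+(k:ℝ)+1) := by
      have e : μ+(m:ℝ)+(k:ℝ)+1 = (μ+1) + ((m+k : ℕ) : ℝ) := by push_cast; ring
      rw [e, Gamma_poch (by linarith : (0:ℝ) < μ+1)]
      have hp1 : ((m+k).factorial : ℝ) ≤ poch (μ+1) (m+k) :=
        factorial_le_poch (by linarith) (m+k)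
      have hp2 : (m.factorial : ℝ) * (k.factorial : ℝ) ≤ ((m+k).factorial : ℝ) := by
        exact_mod_cast Nat.le_of_dvd (m+k).factorial_pos
          (Nat.factorial_mul_factorial_dvd_factorial_add m k)
      have hk1 : (1:ℝ) ≤ (k.factorial : ℝ) := by exact_mod_cast k.factorial_pos
      calc Real.Gamma (μ+1) * ((m.factorial : ℝ) * (k.factorial : ℝ))
          ≤ Real.Gamma (μ+1) * poch (μ+1) (m+k) := by
            apply mul_le_mul_of_nonneg_left (hp2.trans hp1) hΓμ1.le
        _ = 1 * (Real.Gamma (μ+1) * poch (μ+1) (m+k)) := by ring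
        _ ≤ (k.factorial : ℝ) * (Real.Gamma (μ+1) * poch (μ+1) (m+k)) := by
            apply mul_le_mul_of_nonneg_right hk1
            have := poch_pos (by linarith : (0:ℝ) < μ+1) (m+k)
            positivity
    calc |X|^m * |Y|^k / ((k.factorial : ℝ) * Real.Gamma (μ+(m:ℝ)+(k:ℝ)+1))
        ≤ |X|^m * |Y|^k / (Real.Gamma (μ+1) * ((m.factorial : ℝ) * (k.factorial : ℝ))) := by
          gcongr
          <;> first
            | positivity
            | exact (mul_pos hΓμ1 (mul_pos hfacm hfack))
      _ = (Real.Gamma (μ+1))⁻¹ * ((|X|^m / (m.factorial : ℝ)) * (|Y|^k / (k.factorial : ℝ))) := by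
          field_simp
          try ring
  rw [Summable.tsum_comm hFsum]
  -- unfold Phi3 and finish
  have hPhi : Phi3 1 (μ+1) X Y = Real.Gamma (μ+1) * ∑' m : ℕ, ∑' n : ℕ, F m n := by
    rw [Phi3, ← tsum_mul_left]
    apply tsum_congr
    intro m
    rw [← tsum_mul_left]
    apply tsum_congr
    intro n
    simp only [hF]
    rw [poch_one_eq_factorial]
    have hΓe : Real.Gamma (μ+(m:ℝ)+(n:ℝ)+1) = Real.Gamma (μ+1) * poch (μ+1) (m+n) := by
      rw [← Gamma_poch (by linarith : (0:ℝ) < μ+1)]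
      congr 1
      push_cast
      ring
    rw [hΓe]
    have h1 := poch_pos (by linarith : (0:ℝ) < μ+1) (m+n)
    have hfm : (0:ℝ) < (m.factorial : ℝ) := by positivity
    have hfn : (0:ℝ) < (n.factorial : ℝ) := by positivity
    field_simp
  rw [hPhi, hA]
  have hγμ : γbar^μ ≠ 0 := (Real.rpow_pos_of_pos hγ μ).ne'
  have he1 : Real.exp (κ*μ) ≠ 0 := (Real.exp_pos _).ne'
  generalize (∑' (m : ℕ) (n : ℕ), F m n) = S
  field_simp
end

section
/- Let μ and m be positive integers with μ ≤ m, let κ > 0 and γ̄ > 0, and let f be the κ-μ shadowed probability density function with mean γ̄ and shape parameters κ, μ, m. Then the CDF of the κ-μ shadowed distribution is a finite mixture of Erlang (squared Nakagami) CDFs: for every γ ≥ 0, ∫_0^γ f(x) dx = 1 − Σ_{i=0}^{m−μ} binom(m−μ, i) (m/(μκ+m))^i (μκ/(μκ+m))^{m−μ−i} e^{−γ/Ω} Σ_{r=0}^{m−i−1} (γ/Ω)^r / r!, where Ω = (μκ+m) γ̄ / (m μ (1+κ)). -/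
open MeasureTheory Real

/-- Kummer confluent hypergeometric function `₁F₁(a;b;w)`. -/
noncomputable def kummerM (a b w : ℝ) : ℝ :=
  ∑' n : ℕ, poch a n / poch b n * w ^ n / (Nat.factorial n : ℝ)

/-- The κ-μ shadowed probability density function with mean `γ̄` and shape
parameters `κ ≥ 0`, `μ > 0`, `m > 0`. -/
noncomputable def kappaMuShadowedPDF (κ μ m γbar : ℝ) (x : ℝ) : ℝ :=
  if x < 0 then 0 else
    μ ^ μ * m ^ m * (1 + κ) ^ μ / (Real.Gamma μ * γbar ^ μ * (μ * κ + m) ^ m)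
      * x ^ (μ - 1) * Real.exp (-(μ * (1 + κ) * x) / γbar)
      * kummerM m μ (μ ^ 2 * κ * (1 + κ) * x / ((μ * κ + m) * γbar))

lemma poch_zero (a : ℝ) : poch a 0 = 1 := by simp [poch]

lemma poch_add (a : ℝ) (i j : ℕ) : poch a (i + j) = poch a i * poch (a + i) j := by
  induction j with
  | zero => simp [poch_zero]
  | succ j ih => rw [← add_assoc, poch_succ, ih, poch_succ]; push_cast; ring

/-- key recurrence: `(a+1)ₙ = (a)ₙ + n ⬝ (a+1)ₙ₋₁` -/
lemma poch_shift (a : ℝ) (n : ℕ) :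
    poch (a+1) (n+1) = poch a (n+1) + (n+1) * poch (a+1) n := by
  rw [poch_succ, poch_succ']
  ring

/-- Main combinatorial identity. -/
lemma poch_expand (d : ℕ) : ∀ (a : ℝ) (n : ℕ),
    poch (a + d) n = ∑ i ∈ Finset.range (d+1),
      (d.choose i : ℝ) * (n.descFactorial i : ℝ) * poch (a + i) (n - i) := by
  induction d with
  | zero => intro a n; simp [poch]
  | succ d ih =>
    intro a n
    have key : ∑ i ∈ Finset.range (d+2),
        ((d+1).choose i : ℝ) * (n.descFactorial i : ℝ) * poch (a + i) (n - i)
        = (∑ i ∈ Finset.range (d+1),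
            (d.choose i : ℝ) * (n.descFactorial i : ℝ) * poch (a + i) (n - i))
          + ∑ i ∈ Finset.range (d+1),
            (d.choose i : ℝ) * (n.descFactorial (i+1) : ℝ) * poch (a + (i+1)) (n - (i+1)) := by
      have h1 : ∀ i ∈ Finset.range (d+2), ((d+1).choose i : ℝ) * (n.descFactorial i : ℝ) * poch (a + i) (n - i)
          = (d.choose i : ℝ) * (n.descFactorial i : ℝ) * poch (a + i) (n - i)
            + (if i = 0 then 0 else (d.choose (i-1) : ℝ) * (n.descFactorial i : ℝ) * poch (a + i) (n - i)) := by
        intro i _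
        rcases i with _ | i
        · simp
        · rw [if_neg (Nat.succ_ne_zero i), Nat.succ_sub_one,
              show (d+1).choose (i+1) = d.choose i + d.choose (i+1) from Nat.choose_succ_succ d i]
          push_cast
          ring
      rw [Finset.sum_congr rfl h1, Finset.sum_add_distrib]
      congr 1
      · rw [Finset.sum_range_succ, Nat.choose_succ_self]
        simp
      · rw [Finset.sum_range_succ']
        simp
    rw [key, ← ih a n]
    rcases n with _ | n
    · simp [poch_zero]
    · have h2 : ∀ i ∈ Finset.range (d+1),
          (d.choose i : ℝ) * ((n+1).descFactorial (i+1) : ℝ) * poch (a + ((i:ℝ)+1)) ((n+1) - (i+1))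
          = ((n:ℝ)+1) * ((d.choose i : ℝ) * (n.descFactorial i : ℝ) * poch ((a+1) + i) (n - i)) := by
        intro i _
        rw [Nat.succ_descFactorial_succ, Nat.succ_sub_succ,
          show a + ((i:ℝ)+1) = (a+1) + i by ring]
        push_cast
        ring
      rw [Finset.sum_congr rfl h2, ← Finset.mul_sum, ← ih (a+1) n,
        show a + ((d+1 : ℕ) : ℝ) = (a + d) + 1 by push_cast; ring,
        show a + 1 + (d:ℝ) = (a + d) + 1 by ring,
        poch_shift (a + d) n]

lemma desc_shift (i : ℕ) (w : ℝ) (n : ℕ) :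
    (((n+i).descFactorial i : ℕ) : ℝ) * w ^ (n+i) / (n+i).factorial
      = w ^ i * (w ^ n / n.factorial) := by
  have h := Nat.factorial_mul_descFactorial (Nat.le_add_left i n)
  rw [Nat.add_sub_cancel] at h
  have h1 : (n.factorial : ℝ) ≠ 0 := Nat.cast_ne_zero.2 n.factorial_ne_zero
  have h2 : (((n+i)).factorial : ℝ) ≠ 0 := Nat.cast_ne_zero.2 (n+i).factorial_ne_zero
  have h' : ((n+i).descFactorial i : ℝ) = (n+i).factorial / n.factorial := by
    rw [eq_div_iff h1]
    exact_mod_cast (by rw [mul_comm] at h; exact h)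
  rw [h', pow_add]
  field_simp

lemma summable_desc (i : ℕ) (w : ℝ) :
    Summable (fun n : ℕ => (n.descFactorial i : ℝ) * w ^ n / n.factorial) := by
  rw [← summable_nat_add_iff i]
  have : (fun n : ℕ => ((n+i).descFactorial i : ℝ) * w ^ (n+i) / (n+i).factorial)
      = fun n : ℕ => w ^ i * (w ^ n / n.factorial) := funext (desc_shift i w)
  rw [this]
  exact (Real.summable_pow_div_factorial w).mul_left _

lemma tsum_desc (i : ℕ) (w : ℝ) :
    ∑' n : ℕ, (n.descFactorial i : ℝ) * w ^ n / n.factorial = w ^ i * Real.exp w := by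
  rw [← (summable_desc i w).sum_add_tsum_nat_add i]
  have hz : ∑ k ∈ Finset.range i, (k.descFactorial i : ℝ) * w ^ k / k.factorial = 0 := by
    apply Finset.sum_eq_zero
    intro k hk
    rw [Nat.descFactorial_of_lt (Finset.mem_range.1 hk)]
    simp
  rw [hz, zero_add]
  have : (fun n : ℕ => ((n+i).descFactorial i : ℝ) * w ^ (n+i) / (n+i).factorial)
      = fun n : ℕ => w ^ i * (w ^ n / n.factorial) := funext (desc_shift i w)
  rw [this, tsum_mul_left, Real.exp_eq_exp_ℝ, NormedSpace.exp_eq_tsum_div]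

lemma kummer_closed (μ d : ℕ) (hμ : 0 < μ) (w : ℝ) :
    kummerM ((μ:ℝ) + d) μ w
      = Real.exp w * ∑ i ∈ Finset.range (d+1), (d.choose i : ℝ) * w ^ i / poch μ i := by
  have hμ' : (0:ℝ) < μ := by exact_mod_cast hμ
  have hcoef : ∀ n : ℕ, poch ((μ:ℝ)+d) n / poch μ n * w ^ n / n.factorial
      = ∑ i ∈ Finset.range (d+1),
          (d.choose i : ℝ) / poch μ i * ((n.descFactorial i : ℝ) * w ^ n / n.factorial) := by
    intro n
    rw [poch_expand d μ n, Finset.sum_div, Finset.sum_mul, Finset.sum_div]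
    apply Finset.sum_congr rfl
    intro i _
    rcases le_or_gt i n with hin | hin
    · have hsplit : poch (μ:ℝ) n = poch μ i * poch ((μ:ℝ) + i) (n - i) := by
        rw [← poch_add]
        congr 1
        omega
      have p1 := (poch_pos hμ' i).ne'
      have p2 := (poch_pos (by positivity : (0:ℝ) < (μ:ℝ)+i) (n-i)).ne'
      have p3 : (n.factorial : ℝ) ≠ 0 := Nat.cast_ne_zero.2 n.factorial_ne_zero
      rw [hsplit]
      field_simp
    · rw [Nat.descFactorial_of_lt hin]
      simp
  unfold kummerM
  rw [tsum_congr hcoef, Summable.tsum_finsetSum (fun i _ => (summable_desc i w).mul_left _)]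
  rw [Finset.mul_sum]
  apply Finset.sum_congr rfl
  intro i _
  rw [tsum_mul_left, tsum_desc]
  ring

lemma erlang_int (k : ℕ) (Ω : ℝ) (hΩ : 0 < Ω) (γ : ℝ) :
    ∫ x in (0:ℝ)..γ, x ^ k * Real.exp (-x/Ω)
      = (k.factorial : ℝ) * Ω^(k+1)
        * (1 - Real.exp (-γ/Ω) * ∑ r ∈ Finset.range (k+1), (γ/Ω)^r / (r.factorial : ℝ)) := by
  have hΩ' : Ω ≠ 0 := hΩ.ne'
  set F : ℝ → ℝ := fun t => -((k.factorial : ℝ) * Ω^(k+1))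
      * (Real.exp (-t/Ω) * ∑ r ∈ Finset.range (k+1), (t/Ω)^r / (r.factorial : ℝ)) with hF
  have hderiv : ∀ t : ℝ, HasDerivAt F (t ^ k * Real.exp (-t/Ω)) t := by
    intro t
    have hexp : HasDerivAt (fun t : ℝ => Real.exp (-t/Ω)) (Real.exp (-t/Ω) * (-1/Ω)) t := by
      have h1 : HasDerivAt (fun t : ℝ => -t/Ω) (-1/Ω) t := by
        simpa using ((hasDerivAt_id t).neg.div_const Ω)
      exact (Real.hasDerivAt_exp _).comp t h1
    have hsum : HasDerivAt (fun t : ℝ => ∑ r ∈ Finset.range (k+1), (t/Ω)^r / (r.factorial : ℝ))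
        ((1/Ω) * ∑ r ∈ Finset.range k, (t/Ω)^r / (r.factorial : ℝ)) t := by
      have h1 : HasDerivAt (fun t : ℝ => ∑ r ∈ Finset.range (k+1), (t/Ω)^r / (r.factorial : ℝ))
          (∑ r ∈ Finset.range (k+1), (r : ℝ) * (t/Ω)^(r-1) * (1/Ω) / (r.factorial : ℝ)) t := by
        apply HasDerivAt.fun_sum
        intro r _
        exact (((hasDerivAt_id t).div_const Ω).pow r).div_const _
      convert h1 using 1
      rw [Finset.sum_range_succ']
      simp only [Nat.cast_zero, Nat.factorial_zero, Nat.cast_one, Nat.zero_sub, pow_zero,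
        zero_mul, zero_div, add_zero, Nat.add_sub_cancel, Nat.factorial_succ]
      rw [Finset.mul_sum]
      apply Finset.sum_congr rfl
      intro r _
      have hrf : (r.factorial : ℝ) ≠ 0 := Nat.cast_ne_zero.2 r.factorial_ne_zero
      push_cast
      have hr : ((r:ℝ)+1) ≠ 0 := by positivity
      field_simp
    have := ((hexp.fun_mul hsum).const_mul (-((k.factorial : ℝ) * Ω^(k+1))))
    refine this.congr_deriv ?_
    rw [Finset.sum_range_succ]
    have hfk : (k.factorial : ℝ) ≠ 0 := Nat.cast_ne_zero.2 k.factorial_ne_zero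
    have hdiv : (t/Ω)^k = t^k / Ω^k := div_pow t Ω k
    field_simp
    ring_nf
    field_simp
    rw [one_div, inv_pow, mul_comm (Ω^k), mul_assoc, mul_inv_cancel₀ (pow_ne_zero k hΩ'), mul_one]
  rw [intervalIntegral.integral_eq_sub_of_hasDerivAt (fun t _ => hderiv t)
      (Continuous.intervalIntegrable (by continuity) 0 γ)]
  have hF0 : F 0 = -((k.factorial : ℝ) * Ω^(k+1)) := by
    rw [hF]
    simp only [zero_div, neg_zero, Real.exp_zero, one_mul]
    rw [Finset.sum_range_succ']
    simp [Nat.factorial_zero]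
  rw [hF0, hF]
  ring

lemma poch_natCast (k i : ℕ) :
    poch ((k:ℝ)+1) i = ((k+i).factorial : ℝ) / (k.factorial : ℝ) := by
  induction i with
  | zero => simp [poch]; rw [div_self (Nat.cast_ne_zero.2 k.factorial_ne_zero)]
  | succ i ih =>
    rw [poch_succ, ih]
    have h1 : (k.factorial : ℝ) ≠ 0 := Nat.cast_ne_zero.2 k.factorial_ne_zero
    rw [show k + (i+1) = (k+i)+1 by ring, Nat.factorial_succ]
    push_cast
    field_simp
    ring

set_option maxHeartbeats 2000000 in
lemma pdf_eq (k d : ℕ) (κ γbar : ℝ) (hκ : 0 < κ) (hγ : 0 < γbar)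
    (Ωc : ℝ)
    (hΩc : Ωc = (((k+1:ℕ):ℝ) * κ + ((k+1+d:ℕ):ℝ)) * γbar
        / (((k+1+d:ℕ):ℝ) * ((k+1:ℕ):ℝ) * (1 + κ)))
    (x : ℝ) (hx : 0 ≤ x) :
    kappaMuShadowedPDF κ ((k+1:ℕ):ℝ) ((k+1+d:ℕ):ℝ) γbar x
      = ∑ i ∈ Finset.range (d+1),
          ((d.choose i : ℝ) * (((k+1+d:ℕ):ℝ) / (((k+1:ℕ):ℝ)*κ+((k+1+d:ℕ):ℝ)))^(d-i)
              * (((k+1:ℕ):ℝ)*κ/(((k+1:ℕ):ℝ)*κ+((k+1+d:ℕ):ℝ)))^i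
            / (((k+i).factorial : ℝ) * Ωc^(k+1+i)))
          * (x^(k+i) * Real.exp (-x/Ωc)) := by
  have hμR : ((k+1:ℕ):ℝ) = (k:ℝ)+1 := by push_cast; ring
  have hmR : ((k+1+d:ℕ):ℝ) = ((k:ℝ)+1)+(d:ℝ) := by push_cast; ring
  set μR : ℝ := (k:ℝ)+1 with hμRdef
  have hμR0 : (0:ℝ) < μR := by positivity
  have hmR0 : (0:ℝ) < μR + d := by positivity
  have h1κ : (0:ℝ) < 1+κ := by positivity
  have hsR : (0:ℝ) < μR * κ + (μR + d) := by positivity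
  have hΩ0 : 0 < Ωc := by rw [hΩc, hμR, hmR]; positivity
  rw [kappaMuShadowedPDF, if_neg (not_lt.2 hx), hμR, hmR]
  rw [show Real.Gamma ((k:ℝ)+1) = (k.factorial : ℝ) from Real.Gamma_nat_eq_factorial k]
  have hkc : ∀ w : ℝ, kummerM (μR + (d:ℝ)) μR w
      = Real.exp w * ∑ i ∈ Finset.range (d+1), (d.choose i : ℝ) * w ^ i / poch μR i := by
    intro w
    have h := kummer_closed (k+1) d (Nat.succ_pos k) w
    rwa [hμR] at h
  rw [hkc]
  have e1 : ∀ y : ℝ, y ^ μR = y ^ (k+1 : ℕ) := by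
    intro y
    rw [show μR = ((k+1:ℕ):ℝ) by rw [hμRdef]; push_cast; ring, Real.rpow_natCast]
  have e2 : ∀ y : ℝ, y ^ (μR + (d:ℝ)) = y ^ (k+1+d : ℕ) := by
    intro y
    rw [show μR + (d:ℝ) = ((k+1+d:ℕ):ℝ) by rw [hμRdef]; push_cast; ring, Real.rpow_natCast]
  have e3 : x ^ (μR - 1) = x ^ (k : ℕ) := by
    rw [show μR - 1 = ((k:ℕ):ℝ) by rw [hμRdef]; ring, Real.rpow_natCast]
  simp only [e1, e2, e3]
  rw [Finset.mul_sum, Finset.mul_sum]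
  apply Finset.sum_congr rfl
  intro i hi
  have hid : i ≤ d := by simpa using Nat.lt_succ_iff.1 (Finset.mem_range.1 hi)
  obtain ⟨j, rfl⟩ : ∃ j, d = i + j := ⟨d - i, by omega⟩
  have hE : -(μR * (1 + κ) * x) / γbar
      = -x/Ωc - μR ^ 2 * κ * (1 + κ) * x / ((μR * κ + (μR + ((i+j:ℕ):ℝ))) * γbar) := by
    rw [hΩc, hμR, hmR]
    have hden : μR * κ + (μR + ((i+j:ℕ):ℝ)) ≠ 0 := by
      have : (0:ℝ) < μR * κ + (μR + ((i+j:ℕ):ℝ)) := by positivity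
      exact this.ne'
    field_simp
    ring
  rw [hE, Real.exp_sub, poch_natCast]
  rw [show (i+j) - i = j from by omega]
  have hs' : μR * κ + (μR + ((i+j:ℕ):ℝ)) ≠ 0 := by
    have : (0:ℝ) < μR * κ + (μR + ((i+j:ℕ):ℝ)) := by positivity
    exact this.ne'
  have hkf : (k.factorial : ℝ) ≠ 0 := Nat.cast_ne_zero.2 k.factorial_ne_zero
  have hkif : ((k+i).factorial : ℝ) ≠ 0 := Nat.cast_ne_zero.2 (k+i).factorial_ne_zero
  have hΩ' : Ωc ≠ 0 := hΩ0.ne'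
  have hexpw : Real.exp (μR ^ 2 * κ * (1 + κ) * x / ((μR * κ + (μR + ((i+j:ℕ):ℝ))) * γbar)) ≠ 0 :=
    Real.exp_ne_zero _
  clear_value μR
  set Ew : ℝ := Real.exp (μR ^ 2 * κ * (1 + κ) * x / ((μR * κ + (μR + ((i+j:ℕ):ℝ))) * γbar)) with hEw
  set EΩ : ℝ := Real.exp (-x/Ωc) with hEΩ
  have hEw0 : Ew ≠ 0 := Real.exp_ne_zero _
  have hγ' : γbar ≠ 0 := hγ.ne'
  have hM' : μR + ((i+j:ℕ):ℝ) ≠ 0 := hmR0.ne'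
  have hμ' : μR ≠ 0 := hμR0.ne'
  have h1κ' : (1+κ) ≠ 0 := h1κ.ne'
  clear_value Ew EΩ
  rw [hΩc, hμR, hmR]
  simp only [div_pow, mul_pow, ← pow_mul]
  field_simp
  ring


set_option maxHeartbeats 2000000 in
/-- for positive integers `μ ≤ m`, the CDF of the κ-μ shadowed
distribution is a finite mixture of Erlang (squared Nakagami) CDFs. -/
theorem kappaMuShadowed_cdf_mixture (μ m : ℕ) (hμ : 0 < μ) (hm : 0 < m)
    (hμm : μ ≤ m) (κ γbar : ℝ) (hκ : 0 < κ) (hγ : 0 < γbar)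
    (Ωc : ℝ) (hΩc : Ωc = ((μ : ℝ) * κ + m) * γbar / ((m : ℝ) * μ * (1 + κ)))
    (γ : ℝ) (hγ0 : 0 ≤ γ) :
    ∫ x in (0:ℝ)..γ, kappaMuShadowedPDF κ (μ : ℝ) (m : ℝ) γbar x
      = 1 - ∑ i ∈ Finset.range (m - μ + 1),
            (Nat.choose (m - μ) i : ℝ)
              * ((m : ℝ) / ((μ : ℝ) * κ + m)) ^ i
              * ((μ : ℝ) * κ / ((μ : ℝ) * κ + m)) ^ (m - μ - i)
              * Real.exp (-γ / Ωc)
              * ∑ r ∈ Finset.range (m - i), (γ / Ωc) ^ r / (Nat.factorial r : ℝ) := by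
  obtain ⟨k, rfl⟩ : ∃ k, μ = k + 1 := ⟨μ - 1, by omega⟩
  obtain ⟨d, rfl⟩ : ∃ d, m = (k+1) + d := ⟨m - (k+1), by omega⟩
  rw [show (k+1+d) - (k+1) = d from by omega]
  have hs0 : (0:ℝ) < ((k+1:ℕ):ℝ) * κ + ((k+1+d:ℕ):ℝ) := by positivity
  have hΩ0 : 0 < Ωc := by
    rw [hΩc]
    have h1 : (0:ℝ) < ((k+1+d:ℕ):ℝ) := by positivity
    positivity
  set T : ℕ → ℝ := fun i => (d.choose i : ℝ)
      * (((k+1+d:ℕ):ℝ) / (((k+1:ℕ):ℝ) * κ + ((k+1+d:ℕ):ℝ)))^(d-i)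
      * (((k+1:ℕ):ℝ) * κ / (((k+1:ℕ):ℝ) * κ + ((k+1+d:ℕ):ℝ)))^i with hT
  have hcong : Set.EqOn (fun x => kappaMuShadowedPDF κ ((k+1:ℕ):ℝ) ((k+1+d:ℕ):ℝ) γbar x)
      (fun x => ∑ i ∈ Finset.range (d+1),
        T i / (((k+i).factorial : ℝ) * Ωc^(k+1+i)) * (x^(k+i) * Real.exp (-x/Ωc)))
      (Set.uIcc 0 γ) := by
    intro x hx
    rw [Set.uIcc_of_le hγ0] at hx
    have := pdf_eq k d κ γbar hκ hγ Ωc hΩc x hx.1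
    simpa [hT, div_div] using this
  rw [intervalIntegral.integral_congr hcong,
    intervalIntegral.integral_finset_sum (fun i _ =>
      (Continuous.intervalIntegrable (by continuity) _ _))]
  have hint : ∀ i ∈ Finset.range (d+1),
      ∫ x in (0:ℝ)..γ, T i / (((k+i).factorial : ℝ) * Ωc^(k+1+i)) * (x^(k+i) * Real.exp (-x/Ωc))
        = T i * (1 - Real.exp (-γ/Ωc) * ∑ r ∈ Finset.range (k+i+1), (γ/Ωc)^r / (r.factorial : ℝ)) := by
    intro i _
    rw [intervalIntegral.integral_const_mul, erlang_int (k+i) Ωc hΩ0 γ,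
      show k+1+i = k+i+1 from by omega]
    have h1 : ((k+i).factorial : ℝ) ≠ 0 := Nat.cast_ne_zero.2 (k+i).factorial_ne_zero
    have h2 : Ωc^(k+i+1) ≠ 0 := pow_ne_zero _ hΩ0.ne'
    field_simp
  rw [Finset.sum_congr rfl hint]
  simp only [mul_sub, mul_one]
  rw [Finset.sum_sub_distrib]
  have hT1 : ∑ i ∈ Finset.range (d+1), T i = 1 := by
    have hxy : ((k+1:ℕ):ℝ) * κ / (((k+1:ℕ):ℝ) * κ + ((k+1+d:ℕ):ℝ))
        + ((k+1+d:ℕ):ℝ) / (((k+1:ℕ):ℝ) * κ + ((k+1+d:ℕ):ℝ)) = 1 := by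
      field_simp
    calc ∑ i ∈ Finset.range (d+1), T i
        = ∑ i ∈ Finset.range (d+1),
            (((k+1:ℕ):ℝ) * κ / (((k+1:ℕ):ℝ) * κ + ((k+1+d:ℕ):ℝ)))^i
            * (((k+1+d:ℕ):ℝ) / (((k+1:ℕ):ℝ) * κ + ((k+1+d:ℕ):ℝ)))^(d-i)
            * (d.choose i : ℝ) := Finset.sum_congr rfl (fun i _ => by rw [hT]; ring)
      _ = (((k+1:ℕ):ℝ) * κ / (((k+1:ℕ):ℝ) * κ + ((k+1+d:ℕ):ℝ))
            + ((k+1+d:ℕ):ℝ) / (((k+1:ℕ):ℝ) * κ + ((k+1+d:ℕ):ℝ)))^d := (add_pow _ _ d).symm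
      _ = 1 := by rw [hxy, one_pow]
  rw [hT1]
  congr 1
  rw [← Finset.sum_range_reflect]
  apply Finset.sum_congr rfl
  intro j hj
  have hjd : j ≤ d := by simpa using Nat.lt_succ_iff.1 (Finset.mem_range.1 hj)
  simp only [hT]
  rw [show d + 1 - 1 - j = d - j from by omega,
    show d - (d - j) = j from by omega, Nat.choose_symm hjd,
    show k + (d - j) + 1 = k+1+d-j from by omega]
  ring
end
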